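/- With the order-1 OSD candidates c_i = [c_0^{(1)} + e_i, c_0^{(2)} + h_i] for 1 ≤ i ≤ K (and c_0 for i = 0, with e_0 = 0, h_0 = 0), the correlation Σ_{l=1}^N (−1)^{c_{i,l}} ỹ_l equals Σ_{l=1}^N (−1)^{c_{0,l}} ỹ_l − 2(−1)^{c_{0,i}^{(1)}} ỹ_i + Σ_{l=1}^{N−K} s_l ((−1)^{h_{i,l}} − 1), where s_l = ỹ_{K+l} (−1)^{c_{0,l}^{(2)}}. Consequently, argmax_{0 ≤ i ≤ K} Σ_l (−1)^{c_{i,l}} ỹ_l = argmax_{0 ≤ i ≤ K} { −2(−1)^{c_{0,i}^{(1)}} ỹ_i + Σ_{l=1}^{N−K} s_l (−1)^{h_{i,l}} }, with the convention ỹ_0 = 0. -/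

import Mathlib

open Finset

noncomputable def bpsk (b : ZMod 2) : ℝ := if b = 0 then 1 else -1

lemma bpsk_add (a b : ZMod 2) : bpsk (a + b) = bpsk a * bpsk b := by
  rcases (by decide : ∀ x : ZMod 2, x = 0 ∨ x = 1) a with rfl | rfl <;> rcases (by decide : ∀ x : ZMod 2, x = 0 ∨ x = 1) b with rfl | rfl <;> simp +decide [bpsk, show (1:ZMod 2)+1=0 from rfl]

lemma bpsk_one (b : ZMod 2) : bpsk (b + 1) = bpsk b - 2 * bpsk b := by
  rcases (by decide : ∀ x : ZMod 2, x = 0 ∨ x = 1) b with rfl | rfl <;> simp +decide [bpsk, show (1:ZMod 2)+1=0 from rfl] <;> ring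

/-- Order-1 OSD correlation identity and the resulting simplified argmax.
`none` plays the role of the index `i = 0` (no bit flipped, convention `ỹ_0 = 0`),
`some i` the candidate with bit `i` flipped. -/
theorem osd1_correlation_identity (K m : ℕ)
    (y1 : Fin K → ℝ) (y2 : Fin m → ℝ)
    (c01 : Fin K → ZMod 2) (c02 : Fin m → ZMod 2)
    (h : Fin K → Fin m → ZMod 2)
    (s : Fin m → ℝ) (hs : ∀ l, s l = y2 l * bpsk (c02 l))
    (corr : Option (Fin K) → ℝ)
    (hcorr0 : corr none =
      (∑ l, bpsk (c01 l) * y1 l) + ∑ l, bpsk (c02 l) * y2 l)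
    (hcorr : ∀ i, corr (some i) =
      (∑ l, bpsk (((c01 + Pi.single i 1 : Fin K → ZMod 2)) l) * y1 l) + ∑ l, bpsk (((c02 + h i : Fin m → ZMod 2)) l) * y2 l)
    (surr : Option (Fin K) → ℝ)
    (hsurr0 : surr none = ∑ l, s l)
    (hsurr : ∀ i, surr (some i) =
      -2 * bpsk (c01 i) * y1 i + ∑ l, s l * bpsk (h i l)) :
    (∀ i : Fin K, corr (some i) =
      corr none - 2 * bpsk (c01 i) * y1 i + ∑ l, s l * (bpsk (h i l) - 1)) ∧
    (∀ o₀ : Option (Fin K),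
      (∀ o, corr o ≤ corr o₀) ↔ (∀ o, surr o ≤ surr o₀)) := by
  have hsum1 : ∀ i : Fin K,
      (∑ l, bpsk ((c01 + Pi.single i 1 : Fin K → ZMod 2) l) * y1 l)
        = (∑ l, bpsk (c01 l) * y1 l) - 2 * bpsk (c01 i) * y1 i := by
    intro i
    have : ∀ l, bpsk ((c01 + Pi.single i 1 : Fin K → ZMod 2) l) * y1 l
        = bpsk (c01 l) * y1 l - (if l = i then 2 * bpsk (c01 i) * y1 i else 0) := by
      intro l
      by_cases hl : l = i
      · subst hl
        simp [Pi.add_apply, Pi.single_apply, bpsk_one]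
        ring
      · simp [Pi.add_apply, Pi.single_apply, hl]
    simp only [this, Finset.sum_sub_distrib, Finset.sum_ite_eq', Finset.mem_univ, if_true]
  have hsum2 : ∀ i : Fin K,
      (∑ l, bpsk ((c02 + h i : Fin m → ZMod 2) l) * y2 l) = ∑ l, s l * bpsk (h i l) := by
    intro i
    apply Finset.sum_congr rfl
    intro l _
    rw [hs, Pi.add_apply, bpsk_add]
    ring
  have key : ∀ i : Fin K, corr (some i) =
      corr none - 2 * bpsk (c01 i) * y1 i + ∑ l, s l * (bpsk (h i l) - 1) := by
    intro i
    rw [hcorr, hsum1, hsum2, hcorr0]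
    have hs2 : (∑ l, bpsk (c02 l) * y2 l) = ∑ l, s l := by
      apply Finset.sum_congr rfl; intro l _
      rw [hs]; ring
    rw [hs2]
    simp only [mul_sub_one, Finset.sum_sub_distrib]
    ring
  refine ⟨key, fun o₀ => ?_⟩
  have hconst : ∀ o, corr o = surr o + (corr none - surr none) := by
    intro o
    cases o with
    | none => ring
    | some i =>
      rw [key i, hsurr i, hsurr0]
      simp only [mul_sub_one, Finset.sum_sub_distrib]
      ring
  constructor
  · intro H o; have := H o; rw [hconst o, hconst o₀] at this; linarith
  · intro H o; rw [hconst o, hconst o₀]; have := H o; linarith
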